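/- arXiv:2507.21020 — 4 statements merged into one kernel-verified Lean document; each statement's English description precedes it below -/
import Mathlib

section
/- Let f be integrable on a cube Q and 0 < s < t < 1. Then M_t(f,Q) - M_s(f,Q) ≤ (1/(1-t) + 1/s) · (1/|Q|) ∫_Q |f - ⟨f⟩_Q| dx, where ⟨f⟩_Q is the average of f over Q. In particular, if f ∈ BMO(R^n) then sup_Q [M_t(f,Q) - M_s(f,Q)] ≤ (1/(1-t) + 1/s) ‖f‖_BMO. -/
open MeasureTheory Set

noncomputable section

/-- The axis-parallel half-open cube with corner `a` and side length `h`. -/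
def cube {n : ℕ} (a : Fin n → ℝ) (h : ℝ) : Set (Fin n → ℝ) :=
  Set.univ.pi fun i => Set.Ico (a i) (a i + h)

def IsCube {n : ℕ} (Q : Set (Fin n → ℝ)) : Prop :=
  ∃ a h, 0 < h ∧ Q = cube a h

/-- The upper `s`-median of `f` on `Q`. -/
def med {n : ℕ} (s : ℝ) (f : (Fin n → ℝ) → ℝ) (Q : Set (Fin n → ℝ)) : ℝ :=
  sSup {l : ℝ | (volume {x ∈ Q | f x < l}).toReal ≤ s * (volume Q).toReal}

/-- Average of `f` over `Q`. -/
def cubeAvg {n : ℕ} (f : (Fin n → ℝ) → ℝ) (Q : Set (Fin n → ℝ)) : ℝ :=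
  (volume Q).toReal⁻¹ * ∫ x in Q, f x

/-- Mean oscillation of `f` over `Q`. -/
def cubeOsc {n : ℕ} (f : (Fin n → ℝ) → ℝ) (Q : Set (Fin n → ℝ)) : ℝ :=
  (volume Q).toReal⁻¹ * ∫ x in Q, |f x - cubeAvg f Q|

lemma isCube_facts {n : ℕ} {Q : Set (Fin n → ℝ)} (hQ : IsCube Q) :
    MeasurableSet Q ∧ 0 < (volume Q).toReal ∧ volume Q ≠ ⊤ := by
  obtain ⟨a, h, hh, rfl⟩ := hQ
  have hm : MeasurableSet (cube a h) :=
    MeasurableSet.univ_pi fun i => measurableSet_Ico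
  have hv : volume (cube a h) = ENNReal.ofReal h ^ n := by
    rw [cube, volume_pi_pi]
    simp [Real.volume_Ico]
  refine ⟨hm, ?_, ?_⟩
  · rw [hv]
    simp [ENNReal.toReal_pow, ENNReal.toReal_ofReal hh.le]
    positivity
  · rw [hv]
    exact ENNReal.pow_ne_top ENNReal.ofReal_ne_top

lemma med_bounds {n : ℕ} (f : (Fin n → ℝ) → ℝ) (hf : Measurable f)
    (u : ℝ) (hu0 : 0 < u) (hu1 : u < 1)
    (Q : Set (Fin n → ℝ)) (hQm : MeasurableSet Q)
    (hV : 0 < (volume Q).toReal) (hVt : volume Q ≠ ⊤)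
    (hint : IntegrableOn f Q volume) :
    cubeAvg f Q - (∫ x in Q, |f x - cubeAvg f Q|) / (u * (volume Q).toReal) ≤ med u f Q ∧
    med u f Q ≤ cubeAvg f Q + (∫ x in Q, |f x - cubeAvg f Q|) / ((1 - u) * (volume Q).toReal) := by
  set V := (volume Q).toReal with hVdef
  set A := cubeAvg f Q with hA
  set O := ∫ x in Q, |f x - A| with hO
  have hgint : Integrable (fun x => |f x - A|) (volume.restrict Q) :=
    (hint.sub (integrableOn_const hVt)).abs
  have hOnn : 0 ≤ O := integral_nonneg fun x => abs_nonneg _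
  have h1u : 0 < 1 - u := by linarith
  have huV : 0 < u * V := mul_pos hu0 hV
  have h1uV : 0 < (1 - u) * V := mul_pos h1u hV
  have hfin : ∀ S : Set (Fin n → ℝ), S ⊆ Q → volume S ≠ ⊤ :=
    fun S hS => ((measure_mono hS).trans_lt hVt.lt_top).ne
  -- Chebyshev
  have cheb : ∀ lam : ℝ, 0 < lam →
      (volume {x ∈ Q | lam ≤ |f x - A|}).toReal ≤ O / lam := by
    intro lam hlam
    have hms : MeasurableSet {x : Fin n → ℝ | lam ≤ |f x - A|} :=
      measurableSet_le measurable_const (hf.sub measurable_const).abs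
    have h1 := mul_meas_ge_le_integral_of_nonneg (μ := volume.restrict Q)
      (f := fun x => |f x - A|) (ae_of_all _ fun x => abs_nonneg _) hgint lam
    replace h1 : lam * ((volume.restrict Q) {x | lam ≤ |f x - A|}).toReal ≤ O := h1
    have h2 : (volume.restrict Q) {x | lam ≤ |f x - A|}
        = volume {x ∈ Q | lam ≤ |f x - A|} := by
      rw [Measure.restrict_apply hms]
      congr 1
      ext x; simp [and_comm]
    rw [h2] at h1
    rw [div_eq_inv_mul, ← mul_le_mul_iff_right₀ hlam, mul_inv_cancel_left₀ hlam.ne']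
    exact h1
  -- partition
  have hpart : ∀ l : ℝ, (volume {x ∈ Q | f x < l}).toReal
      + (volume {x ∈ Q | l ≤ f x}).toReal = V := by
    intro l
    have hd : Disjoint {x ∈ Q | f x < l} {x ∈ Q | l ≤ f x} := by
      rw [Set.disjoint_left]
      rintro x ⟨_, h1⟩ ⟨_, h2⟩
      linarith
    have hun : {x ∈ Q | f x < l} ∪ {x ∈ Q | l ≤ f x} = Q := by
      ext x
      constructor
      · rintro (⟨hx, _⟩ | ⟨hx, _⟩) <;> exact hx
      · intro hx
        by_cases hfx : f x < l
        · exact Or.inl ⟨hx, hfx⟩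
        · exact Or.inr ⟨hx, not_lt.mp hfx⟩
    have hm2 : MeasurableSet {x ∈ Q | l ≤ f x} := hQm.inter (hf measurableSet_Ici)
    have hms := measure_union (μ := volume) hd hm2
    rw [hun] at hms
    rw [← ENNReal.toReal_add (hfin _ (sep_subset _ _)) (hfin _ (sep_subset _ _)), ← hms]
  -- membership
  have hmem : ∀ lam : ℝ, 0 < lam → O ≤ lam * (u * V) →
      (volume {x ∈ Q | f x < A - lam}).toReal ≤ u * V := by
    intro lam hlam hle
    have hsub : {x ∈ Q | f x < A - lam} ⊆ {x ∈ Q | lam ≤ |f x - A|} := by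
      rintro x ⟨hxQ, hx⟩
      refine ⟨hxQ, ?_⟩
      rw [abs_sub_comm]
      calc lam ≤ A - f x := by linarith
        _ ≤ |A - f x| := le_abs_self _
    calc (volume {x ∈ Q | f x < A - lam}).toReal
        ≤ (volume {x ∈ Q | lam ≤ |f x - A|}).toReal :=
          ENNReal.toReal_mono (hfin _ (sep_subset _ _)) (measure_mono hsub)
      _ ≤ O / lam := cheb lam hlam
      _ ≤ u * V := by rw [div_le_iff₀ hlam]; linarith [hle]
  -- upper bound on all members
  have hub : ∀ l ∈ {l : ℝ | (volume {x ∈ Q | f x < l}).toReal ≤ u * V},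
      l ≤ A + O / ((1 - u) * V) := by
    intro l hl
    by_contra hcon
    push_neg at hcon
    set c := O / ((1 - u) * V) with hc
    have hcnn : 0 ≤ c := div_nonneg hOnn h1uV.le
    set lam := l - A with hlam
    have hlam0 : 0 < lam := by simp only [hlam]; linarith
    have hsub : {x ∈ Q | l ≤ f x} ⊆ {x ∈ Q | lam ≤ |f x - A|} := by
      rintro x ⟨hxQ, hx⟩
      refine ⟨hxQ, ?_⟩
      calc lam ≤ f x - A := by simp only [hlam]; linarith
        _ ≤ |f x - A| := le_abs_self _
    have hO_lt : O < lam * ((1 - u) * V) := by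
      have hco : c * ((1 - u) * V) = O := div_mul_cancel₀ _ h1uV.ne'
      calc O = c * ((1 - u) * V) := hco.symm
        _ < lam * ((1 - u) * V) := by
          apply mul_lt_mul_of_pos_right _ h1uV
          simp only [hlam]; linarith
    have h1 : (volume {x ∈ Q | l ≤ f x}).toReal < (1 - u) * V := by
      calc (volume {x ∈ Q | l ≤ f x}).toReal
          ≤ (volume {x ∈ Q | lam ≤ |f x - A|}).toReal :=
            ENNReal.toReal_mono (hfin _ (sep_subset _ _)) (measure_mono hsub)
        _ ≤ O / lam := cheb lam hlam0
        _ < (1 - u) * V := by rw [div_lt_iff₀ hlam0]; linarith [hO_lt]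
    have hp := hpart l
    simp only [mem_setOf_eq] at hl
    have hexp : (1 - u) * V = V - u * V := by ring
    linarith
  constructor
  · -- lower bound
    apply le_of_forall_pos_le_add
    intro ε hε
    have heq : (O / (u * V)) * (u * V) = O := div_mul_cancel₀ _ huV.ne'
    have hmem' : A - (O / (u * V) + ε) ∈
        {l : ℝ | (volume {x ∈ Q | f x < l}).toReal ≤ u * V} := by
      apply hmem
      · positivity
      · nlinarith [mul_pos hε huV]
    have hbdd : BddAbove {l : ℝ | (volume {x ∈ Q | f x < l}).toReal ≤ u * V} :=
      ⟨A + O / ((1 - u) * V), hub⟩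
    have hle := le_csSup hbdd hmem'
    rw [med]
    linarith
  · -- upper bound
    apply csSup_le
    · refine ⟨A - (O / (u * V) + 1), hmem _ (by positivity) ?_⟩
      have heq : (O / (u * V)) * (u * V) = O := div_mul_cancel₀ _ huV.ne'
      nlinarith
    · exact hub

theorem median_diff_le_oscillation {n : ℕ} (f : (Fin n → ℝ) → ℝ) (hf : Measurable f)
    (s t : ℝ) (hs : 0 < s) (hst : s < t) (ht : t < 1) :
    (∀ Q : Set (Fin n → ℝ), IsCube Q → IntegrableOn f Q volume →
      med t f Q - med s f Q ≤ (1 / (1 - t) + 1 / s) * cubeOsc f Q) ∧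
    (∀ K : ℝ, (∀ Q : Set (Fin n → ℝ), IsCube Q → IntegrableOn f Q volume) →
      (∀ Q : Set (Fin n → ℝ), IsCube Q → cubeOsc f Q ≤ K) →
      ∀ Q : Set (Fin n → ℝ), IsCube Q →
        med t f Q - med s f Q ≤ (1 / (1 - t) + 1 / s) * K) := by
  have h1t : 0 < 1 - t := by linarith
  have part1 : ∀ Q : Set (Fin n → ℝ), IsCube Q → IntegrableOn f Q volume →
      med t f Q - med s f Q ≤ (1 / (1 - t) + 1 / s) * cubeOsc f Q := by
    intro Q hQ hint
    obtain ⟨hQm, hV, hVt⟩ := isCube_facts hQ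
    obtain ⟨hls, _⟩ := med_bounds f hf s hs (hst.trans ht) Q hQm hV hVt hint
    obtain ⟨_, hut⟩ := med_bounds f hf t (hs.trans hst) ht Q hQm hV hVt hint
    have hkey : (∫ x in Q, |f x - cubeAvg f Q|) / ((1 - t) * (volume Q).toReal)
        + (∫ x in Q, |f x - cubeAvg f Q|) / (s * (volume Q).toReal)
        = (1 / (1 - t) + 1 / s) * cubeOsc f Q := by
      rw [cubeOsc]
      field_simp
    linarith
  refine ⟨part1, ?_⟩
  intro K hintall hosc Q hQ
  have hC : 0 ≤ 1 / (1 - t) + 1 / s := by positivity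
  calc med t f Q - med s f Q ≤ (1 / (1 - t) + 1 / s) * cubeOsc f Q :=
        part1 Q hQ (hintall Q hQ)
    _ ≤ (1 / (1 - t) + 1 / s) * K :=
        mul_le_mul_of_nonneg_left (hosc Q hQ) hC
end
end

section
/- Let 0 < s < t < 1 and let f be a real-valued measurable function on a cube Q. Then the local mean oscillation ω_a(f,Q) with a = 1-(t-s) satisfies ω_a(f,Q) ≤ M_t(f,Q) - M_s(f,Q) (in fact M_{t-s}(|f - M_s(f,Q)|, Q) ≤ M_t(f,Q) - M_s(f,Q)). -/
open MeasureTheory Set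

noncomputable section

/-- The local mean oscillation `ω_a(f,Q) = inf_c M_{1-a}(|f-c|,Q)`. -/
def localOsc {n : ℕ} (a : ℝ) (f : (Fin n → ℝ) → ℝ) (Q : Set (Fin n → ℝ)) : ℝ :=
  ⨅ c : ℝ, med (1 - a) (fun x => |f x - c|) Q

namespace LocalOscAux

variable {n : ℕ}

/-- The distribution function. -/
def F (f : (Fin n → ℝ) → ℝ) (Q : Set (Fin n → ℝ)) (l : ℝ) : ℝ :=
  (volume {x ∈ Q | f x < l}).toReal

/-- The set whose sup is `med c f Q`. -/
def A (c : ℝ) (f : (Fin n → ℝ) → ℝ) (Q : Set (Fin n → ℝ)) : Set ℝ :=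
  {l | F f Q l ≤ c * (volume Q).toReal}

lemma med_eq (c : ℝ) (f : (Fin n → ℝ) → ℝ) (Q : Set (Fin n → ℝ)) :
    med c f Q = sSup (A c f Q) := rfl

variable {f : (Fin n → ℝ) → ℝ} {Q : Set (Fin n → ℝ)}

lemma ne_top' (hfin : volume Q ≠ ⊤) (l : ℝ) : volume {x ∈ Q | f x < l} ≠ ⊤ :=
  ((measure_mono (sep_subset _ _)).trans_lt (lt_top_iff_ne_top.2 hfin)).ne

lemma F_mono (hfin : volume Q ≠ ⊤) : Monotone (F f Q) := by
  intro l₁ l₂ h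
  exact ENNReal.toReal_mono (ne_top' hfin l₂)
    (measure_mono fun x hx => ⟨hx.1, hx.2.trans_le h⟩)

lemma A_dc (hfin : volume Q ≠ ⊤) {c l l' : ℝ} (hl : l ∈ A c f Q) (h : l' ≤ l) :
    l' ∈ A c f Q :=
  le_trans (F_mono hfin h) hl

lemma sep_meas (hQm : MeasurableSet Q) (hf : Measurable f) (l : ℝ) :
    MeasurableSet {x ∈ Q | f x < l} :=
  hQm.inter (hf measurableSet_Iio)

lemma A_nonempty (hQm : MeasurableSet Q) (hf : Measurable f) (hfin : volume Q ≠ ⊤)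
    {c : ℝ} (hc : 0 < c * (volume Q).toReal) : (A c f Q).Nonempty := by
  set s : ℕ → Set (Fin n → ℝ) := fun k => {x ∈ Q | f x < -(k : ℝ)} with hs
  have hanti : Antitone s := fun k k' hkk' x hx =>
    ⟨hx.1, hx.2.trans_le (by simp; exact_mod_cast hkk')⟩
  have hempty : ⋂ k, s k = ∅ := by
    ext x
    simp only [mem_iInter, mem_empty_iff_false, iff_false, not_forall]
    obtain ⟨k, hk⟩ := exists_nat_gt (-f x)
    exact ⟨k, fun hx => absurd hx.2 (by push_neg; linarith)⟩
  have htend : Filter.Tendsto (fun k => volume (s k)) Filter.atTop (nhds 0) := by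
    have := tendsto_measure_iInter_atTop
      (fun k => (sep_meas hQm hf _).nullMeasurableSet) hanti ⟨0, ne_top' hfin _⟩
    rwa [hempty, measure_empty] at this
  have htend' : Filter.Tendsto (fun k => (volume (s k)).toReal) Filter.atTop (nhds 0) := by
    have := (ENNReal.tendsto_toReal (by simp)).comp htend
    simpa [Function.comp_def] using this
  obtain ⟨k, hk⟩ := (htend'.eventually_lt_const hc).exists
  exact ⟨-(k : ℝ), hk.le⟩

lemma A_bddAbove (hQm : MeasurableSet Q) (hf : Measurable f) (hfin : volume Q ≠ ⊤)
    {c : ℝ} (hc : c * (volume Q).toReal < (volume Q).toReal) : BddAbove (A c f Q) := by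
  set s : ℕ → Set (Fin n → ℝ) := fun k => {x ∈ Q | f x < (k : ℝ)} with hs
  have hmono : Monotone s := fun k k' hkk' x hx =>
    ⟨hx.1, hx.2.trans_le (by exact_mod_cast hkk')⟩
  have hunion : ⋃ k, s k = Q := by
    ext x
    simp only [mem_iUnion]
    constructor
    · rintro ⟨k, hk⟩; exact hk.1
    · intro hx
      obtain ⟨k, hk⟩ := exists_nat_gt (f x)
      exact ⟨k, hx, hk⟩
  have htend : Filter.Tendsto (fun k => volume (s k)) Filter.atTop (nhds (volume Q)) := by
    have := tendsto_measure_iUnion_atTop (μ := volume) hmono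
    rwa [hunion] at this
  have htend' : Filter.Tendsto (fun k => (volume (s k)).toReal) Filter.atTop
      (nhds (volume Q).toReal) := by
    have := (ENNReal.tendsto_toReal hfin).comp htend
    simpa [Function.comp_def] using this
  obtain ⟨k, hk⟩ := (htend'.eventually_const_lt hc).exists
  refine ⟨(k : ℝ), fun l hl => ?_⟩
  by_contra hkl
  push_neg at hkl
  exact absurd (le_trans (F_mono hfin hkl.le) hl) (not_le.2 hk)

lemma mem_A_of_lt_med (hQm : MeasurableSet Q) (hf : Measurable f) (hfin : volume Q ≠ ⊤)
    {c l : ℝ} (hc : 0 < c * (volume Q).toReal) (hl : l < med c f Q) : l ∈ A c f Q := by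
  obtain ⟨l', hl', hll'⟩ := exists_lt_of_lt_csSup (A_nonempty hQm hf hfin hc) hl
  exact A_dc hfin hl' hll'.le

end LocalOscAux

open LocalOscAux in
theorem localOsc_le_median_diff {n : ℕ} (f : (Fin n → ℝ) → ℝ) (hf : Measurable f)
    (s t : ℝ) (hs : 0 < s) (hst : s < t) (ht : t < 1)
    (Q : Set (Fin n → ℝ)) (hQ : IsCube Q) :
    med (t - s) (fun x => |f x - med s f Q|) Q ≤ med t f Q - med s f Q ∧
    localOsc (1 - (t - s)) f Q ≤ med t f Q - med s f Q := by
  obtain ⟨a, h, hh, rfl⟩ := hQ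
  have hQm : MeasurableSet (cube a h) := MeasurableSet.univ_pi fun i => measurableSet_Ico
  have hvol : volume (cube a h) = ENNReal.ofReal h ^ n := by
    rw [cube, volume_pi_pi]
    simp [Real.volume_Ico]
  have hfin : volume (cube a h) ≠ ⊤ := by
    rw [hvol]; exact (ENNReal.pow_ne_top ENNReal.ofReal_ne_top)
  set Q := cube a h
  set V := (volume Q).toReal with hV
  have hVpos : 0 < V := by
    rw [hV, hvol, ENNReal.toReal_pow, ENNReal.toReal_ofReal hh.le]
    positivity
  have hsV : 0 < s * V := mul_pos hs hVpos
  have htV : 0 < t * V := mul_pos (hs.trans hst) hVpos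
  have htV1 : t * V < V := by nlinarith
  have hAs_ne : (A s f Q).Nonempty := A_nonempty hQm hf hfin hsV
  have hAt_ne : (A t f Q).Nonempty := A_nonempty hQm hf hfin htV
  have hAt_bdd : BddAbove (A t f Q) := A_bddAbove hQm hf hfin htV1
  set ms := med s f Q with hms
  set mt := med t f Q with hmt
  have hmsmt : ms ≤ mt := by
    rw [hms, hmt, med_eq, med_eq]
    refine csSup_le_csSup hAt_bdd hAs_ne fun l hl => ?_
    have hl' : F f Q l ≤ s * (volume Q).toReal := hl
    have hW : 0 < (volume Q).toReal := hV ▸ hVpos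
    show F f Q l ≤ t * (volume Q).toReal
    nlinarith [mul_pos (sub_pos.2 hst) hW]
  -- key step: every element of `A (t-s) |f - ms| Q` is at most `mt - ms`
  have hkey : ∀ l ∈ A (t - s) (fun x => |f x - ms|) Q, l ≤ mt - ms := by
    intro l hl
    rcases le_or_gt l 0 with h0 | h0
    · linarith
    · have h1 : F f Q (ms - l / 2) ≤ s * V :=
        mem_A_of_lt_med hQm hf hfin hsV (by rw [← hms]; linarith)
      have hsub : {x ∈ Q | f x < ms + l} ⊆
          {x ∈ Q | f x < ms - l / 2} ∪ {x ∈ Q | |f x - ms| < l} := by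
        rintro x ⟨hxQ, hx⟩
        by_cases h2 : f x < ms - l / 2
        · exact Or.inl ⟨hxQ, h2⟩
        · push_neg at h2
          exact Or.inr ⟨hxQ, abs_lt.2 ⟨by linarith, by linarith⟩⟩
      have h3 : F f Q (ms + l) ≤ s * V + (t - s) * V := by
        calc F f Q (ms + l)
            ≤ ((volume {x ∈ Q | f x < ms - l / 2}) +
              (volume {x ∈ Q | |f x - ms| < l})).toReal := by
              refine ENNReal.toReal_mono ?_ ((measure_mono hsub).trans (measure_union_le _ _))
              exact ENNReal.add_ne_top.2 ⟨ne_top' hfin _, ne_top' (f := fun x => |f x - ms|) hfin _⟩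
          _ = F f Q (ms - l / 2) + F (fun x => |f x - ms|) Q l :=
              ENNReal.toReal_add (ne_top' hfin _) (ne_top' (f := fun x => |f x - ms|) hfin _)
          _ ≤ s * V + (t - s) * V := add_le_add h1 hl
      have h4 : ms + l ∈ A t f Q := by
        refine le_trans h3 ?_
        rw [← hV]; ring_nf; exact le_refl _
      have h5 : ms + l ≤ mt := by
        rw [hmt, med_eq]
        exact le_csSup hAt_bdd h4
      linarith
  have hzero_mem : ∀ c : ℝ, (0 : ℝ) ∈ A (t - s) (fun x => |f x - c|) Q := by
    intro c
    have : {x ∈ Q | |f x - c| < 0} = ∅ := by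
      ext x
      simp only [mem_sep_iff, mem_empty_iff_false, iff_false, not_and]
      intro _
      exact not_lt.2 (abs_nonneg _)
    show F (fun x => |f x - c|) Q 0 ≤ _
    rw [F, this, measure_empty]
    simp only [ENNReal.toReal_zero]
    nlinarith
  have goal1 : med (t - s) (fun x => |f x - ms|) Q ≤ mt - ms := by
    rw [med_eq]
    exact csSup_le ⟨0, hzero_mem ms⟩ hkey
  refine ⟨goal1, ?_⟩
  have hrw : localOsc (1 - (t - s)) f Q = ⨅ c : ℝ, med (t - s) (fun x => |f x - c|) Q := by
    rw [localOsc]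
    simp only [show (1 : ℝ) - (1 - (t - s)) = t - s by ring]
  rw [hrw]
  have hbdd : BddBelow (Set.range fun c : ℝ => med (t - s) (fun x => |f x - c|) Q) := by
    refine ⟨0, ?_⟩
    rintro y ⟨c, rfl⟩
    show (0:ℝ) ≤ med (t - s) (fun x => |f x - c|) Q
    rw [med_eq]
    by_cases hb : BddAbove (A (t - s) (fun x => |f x - c|) Q)
    · exact le_csSup hb (hzero_mem c)
    · rw [Real.sSup_of_not_bddAbove hb]
  exact le_trans (ciInf_le hbdd ms) goal1
end
end

section
/- Let 0 < s < t < 1 and f be real-valued measurable on a cube Q. Then M_t(f,Q) - M_s(f,Q) ≤ 2 M_{max(t,1-s)}(|f - c|, Q) for every c ∈ R; consequently M_t(f,Q) - M_s(f,Q) ≤ 2 ω_{a'}(f,Q) with a' = min(1-t, s). -/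
open MeasureTheory Set

noncomputable section

namespace MedAux

variable {n : ℕ} {Q : Set (Fin n → ℝ)} {g : (Fin n → ℝ) → ℝ}

lemma measSet (hQ : MeasurableSet Q) (hg : Measurable g) (l : ℝ) :
    MeasurableSet {x ∈ Q | g x < l} :=
  hQ.inter (hg measurableSet_Iio)

lemma vol_ne_top (hfin : volume Q ≠ ⊤) (l : ℝ) :
    volume {x ∈ Q | g x < l} ≠ ⊤ :=
  ne_top_of_le_ne_top hfin (measure_mono (sep_subset _ _))

/-- There is some `l₀` with measure of the sublevel set above `p * v`; hence the
set defining the median is bounded above. -/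
lemma bddAbove (hQ : MeasurableSet Q) (hg : Measurable g) (hfin : volume Q ≠ ⊤)
    {p : ℝ} (hp : p < 1) (hv : 0 < (volume Q).toReal) :
    BddAbove {l : ℝ | (volume {x ∈ Q | g x < l}).toReal ≤ p * (volume Q).toReal} := by
  set v := (volume Q).toReal with hvdef
  have hmono : Monotone (fun k : ℕ => {x ∈ Q | g x < (k : ℝ)}) := by
    intro i j hij x hx
    exact ⟨hx.1, lt_of_lt_of_le hx.2 (by exact_mod_cast hij)⟩
  have hun : (⋃ k : ℕ, {x ∈ Q | g x < (k : ℝ)}) = Q := by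
    ext x
    simp only [mem_iUnion, mem_setOf_eq, Set.mem_sep_iff]
    constructor
    · rintro ⟨k, hk, -⟩; exact hk
    · intro hx
      obtain ⟨k, hk⟩ := exists_nat_gt (g x)
      exact ⟨k, hx, hk⟩
  have htend := tendsto_measure_iUnion_atTop (μ := volume) hmono
  rw [hun] at htend
  have htendR : Filter.Tendsto (fun k : ℕ => (volume {x ∈ Q | g x < (k : ℝ)}).toReal)
      Filter.atTop (nhds v) :=
    (ENNReal.tendsto_toReal hfin).comp htend
  have hev : ∀ᶠ k : ℕ in Filter.atTop,
      p * v < (volume {x ∈ Q | g x < (k : ℝ)}).toReal :=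
    htendR.eventually (eventually_gt_nhds (by nlinarith))
  obtain ⟨k, hk⟩ := hev.exists
  refine ⟨(k : ℝ), fun l hl => ?_⟩
  by_contra hlk
  push_neg at hlk
  have hsub : {x ∈ Q | g x < (k : ℝ)} ⊆ {x ∈ Q | g x < l} :=
    fun x hx => ⟨hx.1, lt_of_lt_of_le hx.2 hlk.le⟩
  have := ENNReal.toReal_mono (MedAux.vol_ne_top hfin l) (measure_mono hsub)
  simp only [mem_setOf_eq] at hl
  linarith

lemma nonempty (hQ : MeasurableSet Q) (hg : Measurable g) (hfin : volume Q ≠ ⊤)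
    {p : ℝ} (hp : 0 < p) (hv : 0 < (volume Q).toReal) :
    Set.Nonempty {l : ℝ | (volume {x ∈ Q | g x < l}).toReal ≤ p * (volume Q).toReal} := by
  set v := (volume Q).toReal with hvdef
  have hanti : Antitone (fun k : ℕ => {x ∈ Q | g x < -(k : ℝ)}) := by
    intro i j hij x hx
    refine ⟨hx.1, lt_of_lt_of_le hx.2 (by simp; exact_mod_cast hij)⟩
  have hint : (⋂ k : ℕ, {x ∈ Q | g x < -(k : ℝ)}) = ∅ := by
    apply eq_empty_iff_forall_notMem.2
    intro x hx
    simp only [mem_iInter, Set.mem_sep_iff] at hx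
    obtain ⟨k, hk⟩ := exists_nat_gt (-g x)
    exact absurd (hx k).2 (by linarith)
  have htend := tendsto_measure_iInter_atTop (μ := volume)
    (fun k => (measSet hQ hg _).nullMeasurableSet) hanti ⟨0, MedAux.vol_ne_top hfin _⟩
  rw [hint, measure_empty] at htend
  have htendR : Filter.Tendsto (fun k : ℕ => (volume {x ∈ Q | g x < -(k : ℝ)}).toReal)
      Filter.atTop (nhds 0) := by
    have := (ENNReal.tendsto_toReal (by simp)).comp htend
    simpa [Function.comp_def] using this
  have hev : ∀ᶠ k : ℕ in Filter.atTop,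
      (volume {x ∈ Q | g x < -(k : ℝ)}).toReal < p * v :=
    htendR.eventually (eventually_lt_nhds (by nlinarith))
  obtain ⟨k, hk⟩ := hev.exists
  exact ⟨-(k : ℝ), hk.le⟩

/-- If the sublevel set at `l` has measure at most `p * v`, then `l ≤ med p g Q`. -/
lemma le_med (hQ : MeasurableSet Q) (hg : Measurable g) (hfin : volume Q ≠ ⊤)
    {p : ℝ} (hp : p < 1) (hv : 0 < (volume Q).toReal) {l : ℝ}
    (hl : (volume {x ∈ Q | g x < l}).toReal ≤ p * (volume Q).toReal) :
    l ≤ med p g Q :=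
  le_csSup (bddAbove hQ hg hfin hp hv) hl

/-- If `l > med p g Q` then the sublevel set at `l` has measure greater than `p * v`. -/
lemma measure_gt_of_med_lt (hQ : MeasurableSet Q) (hg : Measurable g) (hfin : volume Q ≠ ⊤)
    {p : ℝ} (hp : p < 1) (hv : 0 < (volume Q).toReal) {l : ℝ}
    (hl : med p g Q < l) :
    p * (volume Q).toReal < (volume {x ∈ Q | g x < l}).toReal := by
  by_contra hc
  push_neg at hc
  exact absurd (le_med hQ hg hfin hp hv hc) (not_le.2 hl)

end MedAux

theorem median_diff_le_localOsc {n : ℕ} (f : (Fin n → ℝ) → ℝ) (hf : Measurable f)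
    (s t : ℝ) (hs : 0 < s) (hst : s < t) (ht : t < 1)
    (Q : Set (Fin n → ℝ)) (hQ : IsCube Q) :
    (∀ c : ℝ, med t f Q - med s f Q ≤
      2 * med (max t (1 - s)) (fun x => |f x - c|) Q) ∧
    med t f Q - med s f Q ≤ 2 * localOsc (min (1 - t) s) f Q := by
  obtain ⟨a, h, hh, rfl⟩ := hQ
  have hQm : MeasurableSet (cube a h) :=
    MeasurableSet.univ_pi fun i => measurableSet_Ico
  have hvol : volume (cube a h) = ENNReal.ofReal h ^ n := by
    rw [cube, volume_pi_pi]
    simp [Real.volume_Ico]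
  have hfin : volume (cube a h) ≠ ⊤ := by
    rw [hvol]; exact (ENNReal.pow_lt_top ENNReal.ofReal_lt_top).ne
  have hv : 0 < (volume (cube a h)).toReal := by
    rw [hvol]
    rw [ENNReal.toReal_pow, ENNReal.toReal_ofReal hh.le]
    positivity
  set v := (volume (cube a h)).toReal with hvdef
  set Q := cube a h with hQdef
  set r := max t (1 - s) with hrdef
  have hr1 : r < 1 := max_lt ht (by linarith)
  have hrt : t ≤ r := le_max_left _ _
  have hrs : 1 - s ≤ r := le_max_right _ _
  have key : ∀ c : ℝ, med t f Q - med s f Q ≤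
      2 * med r (fun x => |f x - c|) Q := by
    intro c
    set g : (Fin n → ℝ) → ℝ := fun x => |f x - c| with hgdef
    have hg : Measurable g := (hf.sub measurable_const).abs
    set m := med r g Q with hmdef
    -- Claim A : med t f Q ≤ c + m
    have claimA : med t f Q ≤ c + m := by
      apply csSup_le (MedAux.nonempty hQm hf hfin hs hv |>.mono ?_)
      · intro l hl
        by_contra hlc
        push_neg at hlc
        have hm' : m < l - c := by linarith
        have hbig := MedAux.measure_gt_of_med_lt hQm hg hfin hr1 hv hm'
        have hsub : {x ∈ Q | g x < l - c} ⊆ {x ∈ Q | f x < l} := by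
          intro x hx
          refine ⟨hx.1, ?_⟩
          have := (abs_lt.1 hx.2).2
          linarith
        have hmono2 := ENNReal.toReal_mono (MedAux.vol_ne_top hfin l) (measure_mono hsub)
        simp only [mem_setOf_eq, ← hvdef] at hl
        have htr : t * v ≤ r * v := by nlinarith
        linarith
      · -- s-set ⊆ t-set
        intro l hl
        simp only [mem_setOf_eq] at hl ⊢
        nlinarith
    -- Claim B : c - m ≤ med s f Q
    have claimB : c - m ≤ med s f Q := by
      have step : ∀ l' : ℝ, m < l' → c - l' ≤ med s f Q := by
        intro l' hl'
        apply MedAux.le_med hQm hf hfin (lt_trans hst ht) hv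
        have hbig := MedAux.measure_gt_of_med_lt hQm hg hfin hr1 hv hl'
        -- disjointness
        set D₁ := {x ∈ Q | f x < c - l'} with hD1
        set D₂ := {x ∈ Q | g x < l'} with hD2
        have hdisj : Disjoint D₁ D₂ := by
          rw [Set.disjoint_left]
          rintro x ⟨-, hx1⟩ ⟨-, hx2⟩
          have := (abs_lt.1 hx2).1
          linarith
        have hunion : volume D₁ + volume D₂ ≤ volume Q := by
          rw [← measure_union hdisj (MedAux.measSet hQm hg l')]
          exact measure_mono (union_subset (sep_subset _ _) (sep_subset _ _))
        have h1 : (volume D₁).toReal + (volume D₂).toReal ≤ v := by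
          rw [← ENNReal.toReal_add (MedAux.vol_ne_top hfin _) (MedAux.vol_ne_top hfin _)]
          exact ENNReal.toReal_mono hfin hunion
        have h2 : (1 - s) * v ≤ r * v := by nlinarith
        linarith
      by_contra hc
      push_neg at hc
      have := step (m + (c - m - med s f Q) / 2) (by linarith)
      linarith
    linarith
  refine ⟨key, ?_⟩
  have hminmax : 1 - min (1 - t) s = r := by
    rcases le_total (1 - t) s with hle | hle
    · rw [min_eq_left hle, hrdef, max_eq_left (by linarith)]; ring
    · rw [min_eq_right hle, hrdef, max_eq_right (by linarith)]
  rw [localOsc, hminmax]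
  have hhalf : (med t f Q - med s f Q) / 2 ≤ ⨅ c : ℝ, med r (fun x => |f x - c|) Q :=
    le_ciInf fun c => by linarith [key c]
  linarith [hhalf]
end
end

section
/- Let E be a nonempty proper subset of R^n and d(x) = dist(x,E). For any 0 < s < t < 1 and any cube Q_0 intersecting E, M_s(d,Q_0)^n ≤ 2^n V_s(Q_0) and V_s(Q_0) ≤ C(n,s,t) M_t(d,Q_0)^n, where V_s(Q_0) := sup{δ > 0 : there exist E-free dyadic subcubes Q_1,...,Q_k of Q_0 with |Q_i| ≥ δ and ∑_i |Q_i| ≥ (1-s)|Q_0|}. -/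
open MeasureTheory Set

noncomputable section

/-- `Q` is a dyadic subcube of the cube `Q0`. -/
def IsDyadicSubcubeOf {n : ℕ} (Q0 Q : Set (Fin n → ℝ)) : Prop :=
  ∃ a h, 0 < h ∧ Q0 = cube a h ∧ ∃ (j : ℕ) (k : Fin n → ℕ), (∀ i, k i < 2 ^ j) ∧
    Q = cube (fun i => a i + k i * (h / 2 ^ j)) (h / 2 ^ j)

/-- `V_s(Q0)`: the largest `δ > 0` such that a `(1-s)` proportion of `Q0` can be filled
with pairwise disjoint `E`-free dyadic subcubes of measure at least `δ`. -/
def freeVol {n : ℕ} (E Q0 : Set (Fin n → ℝ)) (s : ℝ) : ℝ :=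
  sSup {δ : ℝ | 0 < δ ∧ ∃ F : Finset (Set (Fin n → ℝ)),
    (∀ Q ∈ F, IsDyadicSubcubeOf Q0 Q ∧ Q ∩ E = ∅ ∧ δ ≤ (volume Q).toReal) ∧
    (F : Set (Set (Fin n → ℝ))).PairwiseDisjoint id ∧
    (1 - s) * (volume Q0).toReal ≤ ∑ Q ∈ F, (volume Q).toReal}

namespace MedAux
variable {n : ℕ}

lemma mem_cube_iff {a : Fin n → ℝ} {h : ℝ} {x : Fin n → ℝ} :
    x ∈ cube a h ↔ ∀ i, a i ≤ x i ∧ x i < a i + h := by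
  simp [cube, Set.mem_pi]

lemma measurableSet_cube (a : Fin n → ℝ) (h : ℝ) : MeasurableSet (cube a h) :=
  MeasurableSet.univ_pi fun i => measurableSet_Ico

lemma volume_cube (a : Fin n → ℝ) {h : ℝ} (hh : 0 ≤ h) :
    volume (cube a h) = ENNReal.ofReal (h ^ n) := by
  rw [cube, volume_pi_pi]
  simp only [Real.volume_Ico, add_sub_cancel_left]
  rw [Finset.prod_const, Finset.card_univ, Fintype.card_fin, ← ENNReal.ofReal_pow hh]

lemma dist_lt_of_mem_cube {b : Fin n → ℝ} {w : ℝ} (hw : 0 < w) {x y : Fin n → ℝ}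
    (hx : x ∈ cube b w) (hy : y ∈ cube b w) : dist x y < w := by
  rw [dist_pi_lt_iff hw]
  intro i
  have h1 := mem_cube_iff.1 hx i
  have h2 := mem_cube_iff.1 hy i
  rw [Real.dist_eq, abs_lt]
  constructor <;> linarith

def sub (a : Fin n → ℝ) (h : ℝ) (j : ℕ) (k : Fin n → ℕ) : Set (Fin n → ℝ) :=
  cube (fun i => a i + k i * (h / 2 ^ j)) (h / 2 ^ j)

lemma sub_subset {a : Fin n → ℝ} {h : ℝ} (hh : 0 ≤ h) {j : ℕ} {k : Fin n → ℕ}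
    (hk : ∀ i, k i < 2 ^ j) : sub a h j k ⊆ cube a h := by
  intro x hx
  rw [sub, mem_cube_iff] at hx
  rw [mem_cube_iff]
  intro i
  have hw : (0:ℝ) ≤ h / 2 ^ j := by positivity
  have h1 := hx i
  have hki : ((k i : ℝ) + 1) ≤ (2:ℝ) ^ j := by exact_mod_cast Nat.succ_le_of_lt (hk i)
  have h2j : (2:ℝ) ^ j * (h / 2 ^ j) = h := by field_simp
  have hmul := mul_le_mul_of_nonneg_right hki hw
  have hkw : (0:ℝ) ≤ (k i : ℝ) * (h / 2 ^ j) :=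
    mul_nonneg (Nat.cast_nonneg _) hw
  constructor
  · linarith
  · linarith

lemma exists_sub_mem {a : Fin n → ℝ} {h : ℝ} (hh : 0 < h) (j : ℕ) {x : Fin n → ℝ}
    (hx : x ∈ cube a h) : ∃ k : Fin n → ℕ, (∀ i, k i < 2 ^ j) ∧ x ∈ sub a h j k := by
  have hw : (0:ℝ) < h / 2 ^ j := by positivity
  refine ⟨fun i => ⌊(x i - a i) / (h / 2 ^ j)⌋₊, fun i => ?_, ?_⟩
  · have h1 := mem_cube_iff.1 hx i
    have hr : (0:ℝ) ≤ (x i - a i) / (h / 2 ^ j) := div_nonneg (by linarith) hw.le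
    rw [Nat.floor_lt hr, div_lt_iff₀ hw]
    push_cast
    have h2j : (2:ℝ) ^ j * (h / 2 ^ j) = h := by field_simp
    linarith
  · rw [sub, mem_cube_iff]
    intro i
    have h1 := mem_cube_iff.1 hx i
    have hr : (0:ℝ) ≤ (x i - a i) / (h / 2 ^ j) := div_nonneg (by linarith) hw.le
    have hfl := Nat.floor_le hr
    have hfl2 := Nat.lt_floor_add_one ((x i - a i) / (h / 2 ^ j))
    have hcancel : (x i - a i) / (h / 2 ^ j) * (h / 2 ^ j) = x i - a i :=
      div_mul_cancel₀ (x i - a i) hw.ne'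
    have e1 : (⌊(x i - a i) / (h / 2 ^ j)⌋₊ : ℝ) * (h / 2 ^ j) ≤ x i - a i := by
      calc (⌊(x i - a i) / (h / 2 ^ j)⌋₊ : ℝ) * (h / 2 ^ j)
          ≤ (x i - a i) / (h / 2 ^ j) * (h / 2 ^ j) := mul_le_mul_of_nonneg_right hfl hw.le
        _ = x i - a i := hcancel
    have e2 : x i - a i < ((⌊(x i - a i) / (h / 2 ^ j)⌋₊ : ℝ) + 1) * (h / 2 ^ j) := by
      calc x i - a i = (x i - a i) / (h / 2 ^ j) * (h / 2 ^ j) := hcancel.symm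
        _ < ((⌊(x i - a i) / (h / 2 ^ j)⌋₊ : ℝ) + 1) * (h / 2 ^ j) :=
            mul_lt_mul_of_pos_right hfl2 hw
    constructor
    · linarith
    · linarith [e2]

lemma sub_disjoint {a : Fin n → ℝ} {h : ℝ} (hh : 0 < h) {j : ℕ} {k k' : Fin n → ℕ}
    (hne : k ≠ k') : Disjoint (sub a h j k) (sub a h j k') := by
  rw [Set.disjoint_left]
  intro x hx hx'
  obtain ⟨i, hi⟩ := Function.ne_iff.1 hne
  have h1 := mem_cube_iff.1 hx i
  have h2 := mem_cube_iff.1 hx' i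
  have hw : (0:ℝ) < h / 2 ^ j := by positivity
  rcases Nat.lt_or_ge (k i) (k' i) with hlt | hge
  · have hc : ((k i : ℝ) + 1) ≤ (k' i : ℝ) := by exact_mod_cast hlt
    have := mul_le_mul_of_nonneg_right hc hw.le
    linarith
  · have hlt : k' i < k i := lt_of_le_of_ne hge (Ne.symm hi)
    have hc : ((k' i : ℝ) + 1) ≤ (k i : ℝ) := by exact_mod_cast hlt
    have := mul_le_mul_of_nonneg_right hc hw.le
    linarith

variable {E : Set (Fin n → ℝ)}

def medSet (σ : ℝ) (E Q0 : Set (Fin n → ℝ)) : Set ℝ :=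
  {l : ℝ | (volume {x ∈ Q0 | Metric.infDist x E < l}).toReal ≤ σ * (volume Q0).toReal}

lemma med_eq (σ : ℝ) (E Q0 : Set (Fin n → ℝ)) :
    med σ (fun x => Metric.infDist x E) Q0 = sSup (medSet σ E Q0) := rfl

lemma measurableSet_medpart (E Q0 : Set (Fin n → ℝ)) (hQ : MeasurableSet Q0) (l : ℝ) :
    MeasurableSet {x ∈ Q0 | Metric.infDist x E < l} :=
  hQ.inter ((Metric.continuous_infDist_pt E).measurable measurableSet_Iio)

lemma zero_mem_medSet {σ : ℝ} (hσ : 0 ≤ σ) (Q0 : Set (Fin n → ℝ)) :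
    (0:ℝ) ∈ medSet σ E Q0 := by
  have he : {x ∈ Q0 | Metric.infDist x E < (0:ℝ)} = ∅ := by
    ext x
    simp only [Set.mem_sep_iff, Set.mem_empty_iff_false, iff_false, not_and, not_lt]
    exact fun _ => Metric.infDist_nonneg
  rw [medSet, Set.mem_setOf_eq, he]
  simp only [measure_empty, ENNReal.toReal_zero]
  exact mul_nonneg hσ ENNReal.toReal_nonneg

lemma mem_medSet_lt {a : Fin n → ℝ} {h σ : ℝ} (hh : 0 < h) (hσ1 : σ < 1)
    {e : Fin n → ℝ} (he : e ∈ cube a h) (heE : e ∈ E) {l : ℝ}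
    (hl : l ∈ medSet σ E (cube a h)) : l < h := by
  by_contra hge
  push_neg at hge
  have hall : {x ∈ cube a h | Metric.infDist x E < l} = cube a h := by
    ext x
    simp only [Set.mem_sep_iff, and_iff_left_iff_imp]
    intro hx
    have h1 := Metric.infDist_le_dist_of_mem heE (x := x)
    have hd := dist_lt_of_mem_cube hh hx he
    linarith
  rw [medSet, Set.mem_setOf_eq, hall] at hl
  have hV : 0 < (volume (cube a h)).toReal := by
    rw [volume_cube a hh.le, ENNReal.toReal_ofReal (by positivity)]
    positivity
  nlinarith

lemma bddAbove_medSet {a : Fin n → ℝ} {h σ : ℝ} (hh : 0 < h) (hσ1 : σ < 1)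
    {e : Fin n → ℝ} (he : e ∈ cube a h) (heE : e ∈ E) :
    BddAbove (medSet σ E (cube a h)) :=
  ⟨h, fun _ hl => (mem_medSet_lt hh hσ1 he heE hl).le⟩

lemma med_mem {a : Fin n → ℝ} {h σ : ℝ} (hh : 0 < h) (hσ : 0 ≤ σ) :
    sSup (medSet σ E (cube a h)) ∈ medSet σ E (cube a h) := by
  set Q0 := cube a h with hQ0
  set d : (Fin n → ℝ) → ℝ := fun x => Metric.infDist x E with hd
  set m := sSup (medSet σ E Q0) with hm
  have hne : (medSet σ E Q0).Nonempty := ⟨0, zero_mem_medSet hσ Q0⟩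
  have hVQ : volume Q0 ≠ ⊤ := by rw [hQ0, volume_cube a hh.le]; exact ENNReal.ofReal_ne_top
  have hσV : 0 ≤ σ * (volume Q0).toReal := mul_nonneg hσ ENNReal.toReal_nonneg
  have key : ∀ l, l < m → volume {x ∈ Q0 | d x < l} ≤ ENNReal.ofReal (σ * (volume Q0).toReal) := by
    intro l hl
    obtain ⟨l', hl', hll'⟩ := exists_lt_of_lt_csSup hne hl
    have hsub : {x ∈ Q0 | d x < l} ⊆ {x ∈ Q0 | d x < l'} := fun x hx => ⟨hx.1, hx.2.trans hll'⟩
    have h1 : volume {x ∈ Q0 | d x < l'} ≠ ⊤ :=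
      ne_top_of_le_ne_top hVQ (measure_mono (Set.sep_subset _ _))
    calc volume {x ∈ Q0 | d x < l} ≤ volume {x ∈ Q0 | d x < l'} := measure_mono hsub
      _ = ENNReal.ofReal ((volume {x ∈ Q0 | d x < l'}).toReal) := (ENNReal.ofReal_toReal h1).symm
      _ ≤ ENNReal.ofReal (σ * (volume Q0).toReal) := ENNReal.ofReal_le_ofReal hl'
  have hunion : {x ∈ Q0 | d x < m} = ⋃ k : ℕ, {x ∈ Q0 | d x < m - 1/((k:ℝ)+1)} := by
    ext x
    simp only [Set.mem_sep_iff, Set.mem_iUnion]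
    constructor
    · rintro ⟨hx, hdx⟩
      obtain ⟨k, hk⟩ := exists_nat_one_div_lt (by linarith : 0 < m - d x)
      refine ⟨k, hx, by push_cast at hk ⊢; linarith⟩
    · rintro ⟨k, hx, hdx⟩
      have hp : (0:ℝ) < 1/((k:ℝ)+1) := by positivity
      exact ⟨hx, by linarith⟩
  have hmono : Monotone (fun k : ℕ => {x ∈ Q0 | d x < m - 1/((k:ℝ)+1)}) := by
    intro k k' hkk x hx
    have hc : ((k:ℝ)+1) ≤ ((k':ℝ)+1) := by
      have : (k:ℝ) ≤ (k':ℝ) := Nat.cast_le.2 hkk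
      linarith
    have : (1:ℝ)/((k':ℝ)+1) ≤ 1/((k:ℝ)+1) := one_div_le_one_div_of_le (by positivity) hc
    exact ⟨hx.1, by linarith [hx.2]⟩
  rw [medSet, Set.mem_setOf_eq, hunion, Directed.measure_iUnion hmono.directed_le]
  have hle : (⨆ k : ℕ, volume {x ∈ Q0 | d x < m - 1/((k:ℝ)+1)}) ≤
      ENNReal.ofReal (σ * (volume Q0).toReal) := by
    refine iSup_le fun k => key _ ?_
    have hp : (0:ℝ) < 1/((k:ℝ)+1) := by positivity
    linarith
  calc (⨆ k : ℕ, volume {x ∈ Q0 | d x < m - 1/((k:ℝ)+1)}).toReal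
      ≤ (ENNReal.ofReal (σ * (volume Q0).toReal)).toReal :=
        ENNReal.toReal_mono ENNReal.ofReal_ne_top hle
    _ = σ * (volume Q0).toReal := ENNReal.toReal_ofReal hσV

lemma bddAbove_fvSet {E Q0 : Set (Fin n → ℝ)} {s : ℝ} (hs1 : s < 1) (hQ : IsCube Q0) :
    BddAbove {δ : ℝ | 0 < δ ∧ ∃ F : Finset (Set (Fin n → ℝ)),
      (∀ Q ∈ F, IsDyadicSubcubeOf Q0 Q ∧ Q ∩ E = ∅ ∧ δ ≤ (volume Q).toReal) ∧
      (F : Set (Set (Fin n → ℝ))).PairwiseDisjoint id ∧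
      (1 - s) * (volume Q0).toReal ≤ ∑ Q ∈ F, (volume Q).toReal} := by
  obtain ⟨a, h, hh, rfl⟩ := hQ
  refine ⟨(volume (cube a h)).toReal, ?_⟩
  rintro δ ⟨hδ, F, hF, hdisj, hsum⟩
  have hVpos : 0 < (volume (cube a h)).toReal := by
    rw [volume_cube a hh.le, ENNReal.toReal_ofReal (by positivity)]
    positivity
  have hFne : F.Nonempty := by
    rw [Finset.nonempty_iff_ne_empty]
    rintro rfl
    simp only [Finset.sum_empty] at hsum
    nlinarith
  obtain ⟨Q, hQF⟩ := hFne
  obtain ⟨⟨a', h', hh', hQ0, j, k, hk, hQeq⟩, -, hδle⟩ := hF Q hQF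
  have hsub : Q ⊆ cube a h := by
    rw [hQ0, hQeq]
    exact sub_subset hh'.le hk
  refine hδle.trans (ENNReal.toReal_mono ?_ (measure_mono hsub))
  rw [volume_cube a hh.le]
  exact ENNReal.ofReal_ne_top

end MedAux

namespace MedAux

lemma part1 {n : ℕ} (hn : 0 < n) {s : ℝ} (hs : 0 < s) (hs1 : s < 1)
    {E Q0 : Set (Fin n → ℝ)} (hQ : IsCube Q0) (hQE : (Q0 ∩ E).Nonempty) :
    (med s (fun x => Metric.infDist x E) Q0) ^ n ≤ 2 ^ n * freeVol E Q0 s := by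
  classical
  obtain ⟨a, h, hh, rfl⟩ := hQ
  obtain ⟨e, heQ, heE⟩ := hQE
  set d : (Fin n → ℝ) → ℝ := fun x => Metric.infDist x E with hd
  rw [med_eq]
  set m := sSup (medSet s E (cube a h)) with hmdef
  have h0mem := zero_mem_medSet (E := E) hs.le (cube a h)
  have hbdd := bddAbove_medSet (E := E) (σ := s) hh hs1 heQ heE
  have hm0 : 0 ≤ m := le_csSup hbdd h0mem
  have hfv0 : 0 ≤ freeVol E (cube a h) s := Real.sSup_nonneg fun δ hδ => hδ.1.le
  rcases eq_or_lt_of_le hm0 with hm0' | hmpos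
  · rw [← hm0', zero_pow hn.ne']
    positivity
  have hmmem := med_mem (E := E) (σ := s) (a := a) hh hs.le
  have hmh : m < h := mem_medSet_lt hh hs1 heQ heE hmmem
  -- choice of the dyadic generation j
  have hex : ∃ j : ℕ, h / 2 ^ j ≤ m := by
    obtain ⟨j, hj⟩ := pow_unbounded_of_one_lt (h / m) (one_lt_two (α := ℝ))
    refine ⟨j, ?_⟩
    rw [div_lt_iff₀ hmpos] at hj
    rw [div_le_iff₀ (by positivity)]
    nlinarith
  set j := Nat.find hex with hjdef
  have hwle : h / 2 ^ j ≤ m := Nat.find_spec hex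
  have hwpos : 0 < h / 2 ^ j := by positivity
  have hjpos : 0 < j := by
    rcases Nat.eq_zero_or_pos j with h0 | h' 
    · exfalso
      rw [h0] at hwle
      simp only [pow_zero, div_one] at hwle
      linarith
    · exact h'
  have hmin : ¬ (h / 2 ^ (j - 1) ≤ m) := by
    have hlt : j - 1 < Nat.find hex := by rw [← hjdef]; omega
    exact Nat.find_min hex hlt
  have h2w : m < 2 * (h / 2 ^ j) := by
    push_neg at hmin
    have hp : (2:ℝ) ^ j = 2 ^ (j-1) * 2 := by
      rw [← pow_succ]
      congr 1
      omega
    have heq : h / 2 ^ (j-1) = 2 * (h / 2 ^ j) := by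
      rw [hp]
      have h1 : ((2:ℝ) ^ (j-1)) ≠ 0 := by positivity
      field_simp
    linarith [hmin]
  -- the family of E-free dyadic cubes
  set P : (Fin n → Fin (2 ^ j)) → Prop :=
    fun k => ∃ x ∈ sub a h j (fun i => (k i : ℕ)), m ≤ d x with hP
  set F : Finset (Set (Fin n → ℝ)) :=
    (Finset.univ.filter P).image (fun k => sub a h j (fun i => (k i : ℕ))) with hF
  have hVol : volume (cube a h) = ENNReal.ofReal (h ^ n) := volume_cube a hh.le
  have hVQ : volume (cube a h) ≠ ⊤ := by rw [hVol]; exact ENNReal.ofReal_ne_top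
  -- the uncovered set
  set S := (cube a h) \ {x ∈ cube a h | d x < m} with hS
  have hcovS : S ⊆ ⋃ Q ∈ F, Q := by
    rintro x ⟨hxQ, hxnot⟩
    have hmx : m ≤ d x := by
      by_contra hlt
      push_neg at hlt
      exact hxnot ⟨hxQ, hlt⟩
    obtain ⟨k, hkb, hkx⟩ := exists_sub_mem hh j hxQ
    refine Set.mem_biUnion ?_ hkx
    refine Finset.mem_image.2 ⟨fun i => ⟨k i, hkb i⟩,
      Finset.mem_filter.2 ⟨Finset.mem_univ _, ⟨x, hkx, hmx⟩⟩, rfl⟩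
  have hmeasQ : ∀ Q ∈ F, MeasurableSet Q := by
    intro Q hQm
    obtain ⟨k, -, rfl⟩ := Finset.mem_image.1 hQm
    exact measurableSet_cube _ _
  have hdisjF : (F : Set (Set (Fin n → ℝ))).PairwiseDisjoint id := by
    intro Q hQm Q' hQ'm hne
    simp only [hF, Finset.coe_image, Set.mem_image, Finset.mem_coe] at hQm hQ'm
    obtain ⟨k, -, rfl⟩ := hQm
    obtain ⟨k', -, rfl⟩ := hQ'm
    have hkk : (fun i => ((k i : ℕ))) ≠ (fun i => ((k' i : ℕ))) := fun hkk => hne (by rw [hkk])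
    exact sub_disjoint hh hkk
  have hsumtop : ∀ Q ∈ F, volume Q ≠ ⊤ := by
    intro Q hQm
    obtain ⟨k, -, rfl⟩ := Finset.mem_image.1 hQm
    rw [sub, volume_cube _ hwpos.le]
    exact ENNReal.ofReal_ne_top
  have hvS : (1 - s) * (volume (cube a h)).toReal ≤ (volume S).toReal := by
    have hu : {x ∈ cube a h | d x < m} ∪ S = cube a h :=
      Set.union_diff_cancel (Set.sep_subset _ _)
    have h1 : volume (cube a h) ≤ volume {x ∈ cube a h | d x < m} + volume S := by
      conv_lhs => rw [← hu]
      exact measure_union_le _ _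
    have hne1 : volume {x ∈ cube a h | d x < m} ≠ ⊤ :=
      ne_top_of_le_ne_top hVQ (measure_mono (Set.sep_subset _ _))
    have hne2 : volume S ≠ ⊤ := ne_top_of_le_ne_top hVQ (measure_mono Set.diff_subset)
    have h2 : (volume (cube a h)).toReal ≤
        (volume {x ∈ cube a h | d x < m}).toReal + (volume S).toReal := by
      rw [← ENNReal.toReal_add hne1 hne2]
      exact ENNReal.toReal_mono (ENNReal.add_ne_top.2 ⟨hne1, hne2⟩) h1
    have h3 : (volume {x ∈ cube a h | d x < m}).toReal ≤ s * (volume (cube a h)).toReal := hmmem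
    linarith
  have hsum2 : volume S ≤ ∑ Q ∈ F, volume Q := by
    calc volume S ≤ volume (⋃ Q ∈ F, Q) := measure_mono hcovS
      _ = ∑ Q ∈ F, volume Q := measure_biUnion_finset hdisjF (fun Q hQ => hmeasQ Q hQ)
  have hsum3 : (1 - s) * (volume (cube a h)).toReal ≤ ∑ Q ∈ F, (volume Q).toReal := by
    rw [← ENNReal.toReal_sum hsumtop]
    refine le_trans hvS (ENNReal.toReal_mono ?_ hsum2)
    rw [ENNReal.sum_ne_top]
    exact hsumtop
  have hmem : (m/2)^n ∈ {δ : ℝ | 0 < δ ∧ ∃ G : Finset (Set (Fin n → ℝ)),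
      (∀ Q ∈ G, IsDyadicSubcubeOf (cube a h) Q ∧ Q ∩ E = ∅ ∧ δ ≤ (volume Q).toReal) ∧
      (G : Set (Set (Fin n → ℝ))).PairwiseDisjoint id ∧
      (1 - s) * (volume (cube a h)).toReal ≤ ∑ Q ∈ G, (volume Q).toReal} := by
    refine ⟨by positivity, F, ?_, hdisjF, hsum3⟩
    intro Q hQm
    obtain ⟨k, hkf, rfl⟩ := Finset.mem_image.1 hQm
    have hPk : P k := (Finset.mem_filter.1 hkf).2
    refine ⟨⟨a, h, hh, rfl, j, fun i => (k i : ℕ), fun i => (k i).isLt, rfl⟩, ?_, ?_⟩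
    · rw [Set.eq_empty_iff_forall_notMem]
      rintro y ⟨hyQ, hyE⟩
      obtain ⟨x, hxQ, hxm⟩ := hPk
      rw [sub] at hxQ hyQ
      have hdist := dist_lt_of_mem_cube hwpos hxQ hyQ
      have hdle : d x ≤ dist x y := Metric.infDist_le_dist_of_mem hyE
      linarith
    · rw [sub, volume_cube _ hwpos.le, ENNReal.toReal_ofReal (by positivity)]
      exact pow_le_pow_left₀ (by positivity) (by linarith) n
  have hfv : (m/2)^n ≤ freeVol E (cube a h) s :=
    le_csSup (bddAbove_fvSet hs1 ⟨a, h, hh, rfl⟩) hmem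
  have h2m : (2:ℝ) * (m/2) = m := by ring
  calc m^n = 2^n * (m/2)^n := by rw [← mul_pow, h2m]
    _ ≤ 2^n * freeVol E (cube a h) s := mul_le_mul_of_nonneg_left hfv (by positivity)

end MedAux

namespace MedAux

lemma shrink_vol {n : ℕ} {E : Set (Fin n → ℝ)} (hE : E.Nonempty) {b : Fin n → ℝ} {w l : ℝ}
    (hw : 0 < w) (hl0 : 0 ≤ l) (h2lw : 2 * l ≤ w) (hfree : cube b w ∩ E = ∅) :
    ENNReal.ofReal ((w - 2*l) ^ n) ≤ volume (cube b w ∩ {x | l ≤ Metric.infDist x E}) := by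
  have hsub : cube (fun i => b i + l) (w - 2*l) ⊆
      cube b w ∩ {x | l ≤ Metric.infDist x E} := by
    intro x hx
    have hx' := mem_cube_iff.1 hx
    constructor
    · rw [mem_cube_iff]
      intro i
      have := hx' i
      constructor
      · linarith [(hx' i).1]
      · linarith [(hx' i).2]
    · rw [Set.mem_setOf_eq]
      by_contra hlt
      push_neg at hlt
      obtain ⟨y, hyE, hyd⟩ := (Metric.infDist_lt_iff hE).1 hlt
      have hymem : y ∈ cube b w := by
        rw [mem_cube_iff]
        intro i
        have hxi := hx' i
        have hdi : dist (x i) (y i) < l := lt_of_le_of_lt (dist_le_pi_dist x y i) hyd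
        rw [Real.dist_eq, abs_lt] at hdi
        constructor
        · linarith
        · linarith
      exact absurd (Set.mem_inter hymem hyE) (by rw [hfree]; exact Set.notMem_empty y)
  calc ENNReal.ofReal ((w - 2*l)^n)
      = volume (cube (fun i => b i + l) (w - 2*l)) := (volume_cube _ (by linarith)).symm
    _ ≤ _ := measure_mono hsub

set_option maxHeartbeats 1000000 in
lemma part2 {n : ℕ} (hn : 0 < n) {s t : ℝ} (hs : 0 < s) (hst : s < t) (ht : t < 1)
    {E Q0 : Set (Fin n → ℝ)} (hE : E.Nonempty) (hQ : IsCube Q0) (hQE : (Q0 ∩ E).Nonempty) :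
    freeVol E Q0 s ≤ (2*(n:ℝ)*(1-s)/(t-s))^n * (med t (fun x => Metric.infDist x E) Q0) ^ n := by
  classical
  obtain ⟨a, h, hh, rfl⟩ := hQ
  obtain ⟨e, heQ, heE⟩ := hQE
  set d : (Fin n → ℝ) → ℝ := fun x => Metric.infDist x E with hd
  rw [med_eq]
  set m := sSup (medSet t E (cube a h)) with hmdef
  have hnR : (1:ℝ) ≤ (n:ℝ) := by exact_mod_cast hn
  have hs1 : 0 < 1 - s := by linarith
  set c : ℝ := (t - s) / (2 * (n:ℝ) * (1 - s)) with hc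
  have hcpos : 0 < c := by
    apply div_pos (by linarith)
    positivity
  have h2cn : 2 * c * (n:ℝ) = (t-s)/(1-s) := by
    rw [hc]
    field_simp
  have hts1 : (t-s)/(1-s) < 1 := by
    rw [div_lt_one hs1]
    linarith
  have hc12 : 2 * c < 1 := by
    have : 2*c ≤ 2*c*(n:ℝ) := by nlinarith
    linarith
  have hgb' : (1 - t) ≤ (1-2*c)^n * (1-s) := by
    have hb := one_add_mul_le_pow (a := -(2*c)) (by linarith) n
    have hb' : 1 - 2*c*(n:ℝ) ≤ (1-2*c)^n := by
      calc 1 - 2*c*(n:ℝ) = 1 + (n:ℝ) * (-(2*c)) := by ring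
        _ ≤ (1 + -(2*c))^n := hb
        _ = (1-2*c)^n := by ring_nf
    have h1 : 1 - (t-s)/(1-s) ≤ (1-2*c)^n := by rw [← h2cn]; exact hb'
    have h2 : (1 - (t-s)/(1-s)) * (1-s) = 1 - t := by field_simp; ring
    nlinarith
  have hbddm := bddAbove_medSet (E := E) (σ := t) hh ht heQ heE
  have hm0 : 0 ≤ m := le_csSup hbddm (zero_mem_medSet (by linarith) _)
  have hCpos : (0:ℝ) < 2*(n:ℝ)*(1-s)/(t-s) := by
    apply div_pos (by positivity) (by linarith)
  apply Real.sSup_le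
  swap
  · exact mul_nonneg (pow_nonneg hCpos.le n) (pow_nonneg hm0 n)
  rintro δ ⟨hδ, F, hF, hdisj, hsum⟩
  set l : ℝ := c * δ ^ ((n:ℝ)⁻¹) with hl
  have hδr : 0 < δ ^ ((n:ℝ)⁻¹) := Real.rpow_pos_of_pos hδ _
  have hlpos : 0 < l := by positivity
  have hVol : volume (cube a h) = ENNReal.ofReal (h ^ n) := volume_cube a hh.le
  have hVQ : volume (cube a h) ≠ ⊤ := by rw [hVol]; exact ENNReal.ofReal_ne_top
  have hVpos : 0 < (volume (cube a h)).toReal := by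
    rw [hVol, ENNReal.toReal_ofReal (by positivity)]
    positivity
  have hmeasd : MeasurableSet {x : Fin n → ℝ | l ≤ d x} :=
    (isClosed_le continuous_const (Metric.continuous_infDist_pt E)).measurableSet
  have hQb : ∀ Q ∈ F, MeasurableSet Q ∧ volume Q ≠ ⊤ ∧ Q ⊆ cube a h ∧
      (1-2*c)^n * (volume Q).toReal ≤ (volume (Q ∩ {x | l ≤ d x})).toReal := by
    intro Q hQF
    obtain ⟨⟨a', h', hh', hQ0, j, k, hk, hQeq⟩, hfree, hδle⟩ := hF Q hQF
    subst hQeq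
    set w := h' / 2 ^ j with hw
    have hwpos : 0 < w := by positivity
    have hvolQ : volume (cube (fun i => a' i + (k i) * w) w) = ENNReal.ofReal (w ^ n) :=
      volume_cube _ hwpos.le
    have hvolQr : (volume (cube (fun i => a' i + (k i) * w) w)).toReal = w ^ n := by
      rw [hvolQ, ENNReal.toReal_ofReal (by positivity)]
    have hδw : δ ≤ w ^ n := by rw [← hvolQr]; exact hδle
    have hδrw : δ ^ ((n:ℝ)⁻¹) ≤ w := by
      calc δ ^ ((n:ℝ)⁻¹) ≤ (w ^ n) ^ ((n:ℝ)⁻¹) :=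
            Real.rpow_le_rpow hδ.le hδw (by positivity)
        _ = w := Real.pow_rpow_inv_natCast hwpos.le hn.ne'
    have hlw : l ≤ c * w := by
      rw [hl]
      exact mul_le_mul_of_nonneg_left hδrw hcpos.le
    have h2lw : 2 * l ≤ w := by nlinarith
    have hsh := shrink_vol hE hwpos hlpos.le h2lw hfree
    have hQd_ne : volume ((cube (fun i => a' i + (k i) * w) w) ∩ {x | l ≤ d x}) ≠ ⊤ :=
      ne_top_of_le_ne_top (by rw [hvolQ]; exact ENNReal.ofReal_ne_top)
        (measure_mono Set.inter_subset_left)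
    refine ⟨measurableSet_cube _ _, by rw [hvolQ]; exact ENNReal.ofReal_ne_top, ?_, ?_⟩
    · rw [hQ0]
      exact sub_subset hh'.le hk
    · have h4 : (w - 2*l)^n ≤ (volume ((cube (fun i => a' i + (k i) * w) w) ∩ {x | l ≤ d x})).toReal := by
        have h5 := ENNReal.toReal_mono hQd_ne hsh
        rwa [ENNReal.toReal_ofReal (pow_nonneg (by linarith) n)] at h5
      have h6a : (0:ℝ) ≤ (1-2*c)*w := mul_nonneg (by linarith) hwpos.le
      have h6b : (1-2*c)*w ≤ w - 2*l := by nlinarith [hlw]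
      have h6 : (1-2*c)^n * w^n ≤ (w - 2*l)^n := by
        rw [← mul_pow]
        exact pow_le_pow_left₀ h6a h6b n
      rw [hvolQr]
      linarith
  have hdisj2 : (F : Set (Set (Fin n → ℝ))).PairwiseDisjoint (fun Q => Q ∩ {x | l ≤ d x}) :=
    fun Q hQ Q' hQ' hne => (hdisj hQ hQ' hne).mono Set.inter_subset_left Set.inter_subset_left
  have hTne : volume {x ∈ cube a h | l ≤ d x} ≠ ⊤ :=
    ne_top_of_le_ne_top hVQ (measure_mono (Set.sep_subset _ _))
  have hT : (1-2*c)^n * ((1-s) * (volume (cube a h)).toReal) ≤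
      (volume {x ∈ cube a h | l ≤ d x}).toReal := by
    have e1 : ∑ Q ∈ F, volume (Q ∩ {x | l ≤ d x}) = volume (⋃ Q ∈ F, (Q ∩ {x | l ≤ d x})) :=
      (measure_biUnion_finset hdisj2 (fun Q hQ => ((hQb Q hQ).1).inter hmeasd)).symm
    have e2 : (⋃ Q ∈ F, (Q ∩ {x | l ≤ d x})) ⊆ {x ∈ cube a h | l ≤ d x} := by
      intro x hx
      simp only [Set.mem_iUnion] at hx
      obtain ⟨Q, hQF, hxQ, hxd⟩ := hx
      exact ⟨(hQb Q hQF).2.2.1 hxQ, hxd⟩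
    have h12c : (0:ℝ) ≤ 1 - 2*c := by linarith
    calc (1-2*c)^n * ((1-s) * (volume (cube a h)).toReal)
        ≤ (1-2*c)^n * ∑ Q ∈ F, (volume Q).toReal := by
          apply mul_le_mul_of_nonneg_left hsum (by positivity)
      _ = ∑ Q ∈ F, (1-2*c)^n * (volume Q).toReal := Finset.mul_sum _ _ _
      _ ≤ ∑ Q ∈ F, (volume (Q ∩ {x | l ≤ d x})).toReal :=
          Finset.sum_le_sum (fun Q hQ => (hQb Q hQ).2.2.2)
      _ = (∑ Q ∈ F, volume (Q ∩ {x | l ≤ d x})).toReal :=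
          (ENNReal.toReal_sum (fun Q hQ =>
            ne_top_of_le_ne_top ((hQb Q hQ).2.1) (measure_mono Set.inter_subset_left))).symm
      _ = (volume (⋃ Q ∈ F, (Q ∩ {x | l ≤ d x}))).toReal := by rw [e1]
      _ ≤ (volume {x ∈ cube a h | l ≤ d x}).toReal :=
          ENNReal.toReal_mono hTne (measure_mono e2)
  have hsplit : (volume {x ∈ cube a h | d x < l}).toReal +
      (volume {x ∈ cube a h | l ≤ d x}).toReal = (volume (cube a h)).toReal := by
    have hu : {x ∈ cube a h | d x < l} ∪ {x ∈ cube a h | l ≤ d x} = cube a h := by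
      ext x
      constructor
      · rintro (hx | hx) <;> exact hx.1
      · intro hx
        rcases lt_or_ge (d x) l with hcc | hcc
        · exact Or.inl ⟨hx, hcc⟩
        · exact Or.inr ⟨hx, hcc⟩
    have hdisj3 : Disjoint {x ∈ cube a h | d x < l} {x ∈ cube a h | l ≤ d x} := by
      rw [Set.disjoint_left]
      rintro x ⟨-, h1⟩ ⟨-, h2⟩
      linarith
    have hmeas2 : MeasurableSet {x ∈ cube a h | l ≤ d x} := (measurableSet_cube a h).inter hmeasd
    rw [← ENNReal.toReal_add (ne_top_of_le_ne_top hVQ (measure_mono (Set.sep_subset _ _))) hTne,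
      ← measure_union hdisj3 hmeas2, hu]
  have hkey : l ∈ medSet t E (cube a h) := by
    rw [medSet, Set.mem_setOf_eq]
    have hh1 := mul_le_mul_of_nonneg_right hgb' hVpos.le
    nlinarith
  have hlm : l ≤ m := le_csSup hbddm hkey
  have hfrac : δ = (l / c)^n := by
    rw [hl, mul_div_cancel_left₀ _ hcpos.ne']
    exact (Real.rpow_inv_natCast_pow hδ.le hn.ne').symm
  have hmc : m / c = 2*(n:ℝ)*(1-s)/(t-s) * m := by
    rw [hc]
    field_simp
  calc δ = (l/c)^n := hfrac
    _ ≤ (m/c)^n := pow_le_pow_left₀ (by positivity) (by gcongr) n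
    _ = (2*(n:ℝ)*(1-s)/(t-s))^n * m^n := by rw [hmc, mul_pow]

end MedAux

theorem median_dist_vs_freeVol (n : ℕ) (s t : ℝ) (hs : 0 < s) (hst : s < t) (ht : t < 1) :
    ∃ C : ℝ, 0 < C ∧
      ∀ E Q0 : Set (Fin n → ℝ), E.Nonempty → E ≠ Set.univ → IsCube Q0 →
        (Q0 ∩ E).Nonempty →
        (med s (fun x => Metric.infDist x E) Q0) ^ n ≤ 2 ^ n * freeVol E Q0 s ∧
        freeVol E Q0 s ≤ C * (med t (fun x => Metric.infDist x E) Q0) ^ n := by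
  rcases Nat.eq_zero_or_pos n with hn | hn
  · subst hn
    refine ⟨1, one_pos, fun E Q0 hE hEuniv _ _ => absurd ?_ hEuniv⟩
    obtain ⟨y, hy⟩ := hE
    rw [Set.eq_univ_iff_forall]
    intro z
    have hz : z = y := funext fun i => i.elim0
    rw [hz]
    exact hy
  · have hs1 : s < 1 := hst.trans ht
    have hCpos : (0:ℝ) < 2*(n:ℝ)*(1-s)/(t-s) := by
      apply div_pos ?_ (by linarith)
      have hnR : (0:ℝ) < (n:ℝ) := by exact_mod_cast hn
      nlinarith
    refine ⟨(2*(n:ℝ)*(1-s)/(t-s))^n, pow_pos hCpos n, fun E Q0 hE _ hQ hQE => ?_⟩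
    exact ⟨MedAux.part1 hn hs hs1 hQ hQE, MedAux.part2 hn hs hst ht hE hQ hQE⟩
end
end
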